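/- Let {S_y : y ∈ Y} be a product r.c.p. of R with respect to Q and ρ a lifting on (Y,𝔅,Q). Suppose there exist a lifting π on the completion of (X×Y, 𝔄⊗𝔅, R) and liftings σ_y on the completions (X, 𝔄̂_y, Ŝ_y) such that the rectangle formula π(A×B) = ⋃_{y∈ρ(B)} σ_y(A)×{y} holds for all A ∈ 𝔄, B ∈ 𝔅. Then condition (IT) holds: R(A×B) = 0 implies Q(B) = 0 or S_y(A) = 0 for all y ∈ ρ(B). -/
import Mathlib


open MeasureTheory Set

/-- A lifting on the (complete) probability space given by `Q`. -/
def IsLifting {Y : Type*} [MeasurableSpace Y] (Q : Measure Y) (ρ : Set Y → Set Y) : Prop :=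
  (∀ B, MeasurableSet B → MeasurableSet (ρ B) ∧ Q (symmDiff B (ρ B)) = 0) ∧
  (∀ B B', MeasurableSet B → MeasurableSet B' → Q (symmDiff B B') = 0 → ρ B = ρ B') ∧
  ρ ∅ = ∅ ∧ ρ Set.univ = Set.univ ∧
  (∀ B B', MeasurableSet B → MeasurableSet B' → ρ (B ∩ B') = ρ B ∩ ρ B') ∧
  (∀ B, MeasurableSet B → ρ Bᶜ = (ρ B)ᶜ)

/-- A lifting on the completion of the probability space given by `μ`
(acting on all `μ`-null-measurable sets). -/
def IsLiftingNM {α : Type*} [MeasurableSpace α] (μ : Measure α) (τ : Set α → Set α) : Prop :=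
  (∀ E, NullMeasurableSet E μ → NullMeasurableSet (τ E) μ ∧ μ (symmDiff E (τ E)) = 0) ∧
  (∀ E F, NullMeasurableSet E μ → NullMeasurableSet F μ → μ (symmDiff E F) = 0 → τ E = τ F) ∧
  τ ∅ = ∅ ∧ τ Set.univ = Set.univ ∧
  (∀ E F, NullMeasurableSet E μ → NullMeasurableSet F μ → τ (E ∩ F) = τ E ∩ τ F) ∧
  (∀ E, NullMeasurableSet E μ → τ Eᶜ = (τ E)ᶜ)

theorem stmt17 {X Y : Type*} [MeasurableSpace X] [MeasurableSpace Y]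
    (P : Measure X) (Q : Measure Y) (R : Measure (X × Y))
    [IsProbabilityMeasure P] [IsProbabilityMeasure Q] [IsProbabilityMeasure R]
    [Q.IsComplete]
    (hP : R.map Prod.fst = P) (hQ : R.map Prod.snd = Q)
    (S : Y → Measure X) (hSprob : ∀ y, IsProbabilityMeasure (S y))
    (hSmeas : ∀ A : Set X, MeasurableSet A → Measurable fun y => S y A)
    (hSdis : ∀ (A : Set X) (B : Set Y), MeasurableSet A → MeasurableSet B →
      R (A ×ˢ B) = ∫⁻ y in B, S y A ∂Q)
    (ρ : Set Y → Set Y) (hρ : IsLifting Q ρ)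
    (π : Set (X × Y) → Set (X × Y)) (hπ : IsLiftingNM R π)
    (σ : Y → Set X → Set X) (hσ : ∀ y, IsLiftingNM (S y) (σ y))
    (hRF : ∀ (A : Set X) (B : Set Y), MeasurableSet A → MeasurableSet B →
      π (A ×ˢ B) = {p : X × Y | p.2 ∈ ρ B ∧ p.1 ∈ σ p.2 A}) :
    ∀ (A : Set X) (B : Set Y), MeasurableSet A → MeasurableSet B →
      R (A ×ˢ B) = 0 → Q B = 0 ∨ ∀ y ∈ ρ B, S y A = 0 := by
  intro A B hA hB hR0
  right
  intro y hy
  have hπ0 : π (A ×ˢ B) = ∅ := by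
    have h := hπ.2.1 (A ×ˢ B) ∅ ((hA.prod hB).nullMeasurableSet)
      MeasurableSet.empty.nullMeasurableSet
      (by simpa [symmDiff_bot] using hR0)
    rw [h, hπ.2.2.1]
  rw [hRF A B hA hB] at hπ0
  have hσ0 : σ y A = ∅ := by
    ext x
    simp only [Set.mem_empty_iff_false, iff_false]
    intro hx
    have : (x, y) ∈ ({p : X × Y | p.2 ∈ ρ B ∧ p.1 ∈ σ p.2 A} : Set (X × Y)) := ⟨hy, hx⟩
    rw [hπ0] at this
    exact this
  have h := ((hσ y).1 A hA.nullMeasurableSet).2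
  rw [hσ0] at h; simpa [symmDiff] using h
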